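/- Let I be an s×s symmetric negative definite integer matrix whose off-diagonal entries lie in {0, 1}, and suppose the graph on {1,…,s} with edges {v,w} whenever I_{vw} = 1 (v ≠ w) is a tree (in particular ∑_{v<w} I_{vw} = s − 1). Let δ_v := #{w ≠ v : I_{vw} = 1} and let K ∈ ℚ^s be the unique vector with (I·K)_v = −I_{vv} − 2 for all v. Then Kᵀ·I·K + s = ∑_{v} I_{vv} + 3s + 2 + ∑_{v,w} (2 − δ_v)(2 − δ_w)·(I^{-1})_{vw}. -/

import Mathlib

/-- For a negative definite symmetric integer matrix `I` whose off-diagonal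
entries are `0` or `1` and whose associated graph is a tree, and the canonical
vector `K` with `(I·K)_v = -I_{vv} - 2`, one has
`Kᵀ·I·K + s = ∑_v I_{vv} + 3s + 2 + ∑_{v,w} (2-δ_v)(2-δ_w)(I⁻¹)_{vw}`,
where `δ_v` is the valency of `v`. -/
theorem stmt18 (s : ℕ) (I : Matrix (Fin s) (Fin s) ℤ)
    (hsymm : I.IsSymm)
    (hoff : ∀ v w, v ≠ w → I v w = 0 ∨ I v w = 1)
    (hneg : (-(I.map ((↑) : ℤ → ℚ))).PosDef)
    (htree : (SimpleGraph.fromRel (fun v w => I v w = 1)).IsTree)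
    (K : Fin s → ℚ)
    (hK : (I.map ((↑) : ℤ → ℚ)).mulVec K = fun v => -(I v v : ℚ) - 2) :
    dotProduct K ((I.map ((↑) : ℤ → ℚ)).mulVec K) + (s : ℚ)
      = ∑ v, (I v v : ℚ) + 3 * (s : ℚ) + 2
        + ∑ v, ∑ w,
            (2 - ((Finset.univ.filter (fun u => u ≠ v ∧ I v u = 1)).card : ℚ)) *
            (2 - ((Finset.univ.filter (fun u => u ≠ w ∧ I w u = 1)).card : ℚ)) *
            ((I.map ((↑) : ℤ → ℚ))⁻¹ v w) := by
  classical
  set J := I.map ((↑) : ℤ → ℚ) with hJdef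
  have hIsym : ∀ v w, I w v = I v w := fun v w => congrFun (congrFun hsymm v) w
  have hJsym : ∀ v w, J w v = J v w := by
    intro v w; simp [hJdef, Matrix.map_apply, hIsym v w]
  -- determinant is a unit
  have hdet : IsUnit J.det := by
    rw [isUnit_iff_ne_zero]
    intro h0
    obtain ⟨x, hx0, hx⟩ := (Matrix.exists_mulVec_eq_zero_iff).2 h0
    have := (Matrix.posDef_iff_dotProduct_mulVec.mp hneg).2 hx0
    rw [Matrix.neg_mulVec, hx] at this
    simp at this
  set d : Fin s → ℚ := fun v =>
    ((Finset.univ.filter (fun u => u ≠ v ∧ I v u = 1)).card : ℚ) with hd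
  -- row sums
  have hrow : ∀ v, ∑ w, J v w = (I v v : ℚ) + d v := by
    intro v
    have key : ∀ w, J v w
        = (if w = v then (I v v : ℚ) else 0)
          + (if w ≠ v ∧ I v w = 1 then (1:ℚ) else 0) := by
      intro w
      by_cases hw : w = v
      · subst hw; simp [hJdef, Matrix.map_apply]
      · rcases hoff v w (fun h => hw h.symm) with h | h <;>
          simp [hJdef, Matrix.map_apply, hw, h]
    rw [Finset.sum_congr rfl (fun w _ => key w), Finset.sum_add_distrib]
    rw [Finset.sum_ite_eq' Finset.univ v (fun _ => (I v v : ℚ)), Finset.sum_boole]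
    simp [hd]
  -- sum of degrees
  have hdsum : ∑ v, d v = 2 * (s : ℚ) - 2 := by
    set G := SimpleGraph.fromRel (fun v w => I v w = 1) with hG
    have hadj : ∀ v w, G.Adj v w ↔ w ≠ v ∧ I v w = 1 := by
      intro v w
      constructor
      · rintro ⟨h, h1 | h1⟩
        · exact ⟨Ne.symm h, h1⟩
        · exact ⟨Ne.symm h, (hIsym v w) ▸ h1⟩
      · rintro ⟨h, h1⟩
        exact ⟨Ne.symm h, Or.inl h1⟩
    have hdeg : ∀ v, G.degree v
        = (Finset.univ.filter (fun u => u ≠ v ∧ I v u = 1)).card := by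
      intro v
      rw [SimpleGraph.degree, SimpleGraph.neighborFinset_eq_filter]
      congr 1
      apply Finset.filter_congr
      intro u _
      simpa using hadj v u
    have hhs : ∑ v, G.degree v = 2 * G.edgeFinset.card :=
      SimpleGraph.sum_degrees_eq_twice_card_edges G
    have hcard : G.edgeFinset.card + 1 = s := by
      simpa using htree.card_edgeFinset
    have hnat : (∑ v, (Finset.univ.filter (fun u => u ≠ v ∧ I v u = 1)).card) + 2
        = 2 * s := by
      have h' : (∑ v, (Finset.univ.filter (fun u => u ≠ v ∧ I v u = 1)).card)
          = ∑ v, G.degree v := Finset.sum_congr rfl (fun v _ => (hdeg v).symm)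
      omega
    have := congrArg (fun n : ℕ => (n : ℚ)) hnat
    push_cast at this
    simp only [hd]
    linarith
  -- key vector identity: J *ᵥ (K + 1) = d - 2
  have hcK : J.mulVec (fun v => K v + 1) = fun v => d v - 2 := by
    have : (fun v => K v + 1) = K + (fun _ => (1:ℚ)) := rfl
    rw [this, Matrix.mulVec_add]
    funext v
    have h1 : (J.mulVec (fun _ => (1:ℚ))) v = (I v v : ℚ) + d v := by
      simp [Matrix.mulVec, dotProduct]
      exact hrow v
    have h2 := congrFun hK v
    simp only [Pi.add_apply, hJdef] at *
    rw [h2, h1]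
    ring
  -- inverse identity
  have hinv : J⁻¹.mulVec (fun v => d v - 2) = fun v => K v + 1 := by
    rw [← hcK, Matrix.mulVec_mulVec, Matrix.nonsing_inv_mul J hdet, Matrix.one_mulVec]
  -- rewrite the double sum
  have hS : (∑ v, ∑ w,
      (2 - ((Finset.univ.filter (fun u => u ≠ v ∧ I v u = 1)).card : ℚ)) *
      (2 - ((Finset.univ.filter (fun u => u ≠ w ∧ I w u = 1)).card : ℚ)) *
      (J⁻¹ v w))
      = ∑ v, (d v - 2) * (K v + 1) := by
    have hstep : ∀ v, ∑ w, (2 - d v) * (2 - d w) * (J⁻¹ v w)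
        = (2 - d v) * ((J⁻¹.mulVec (fun w => 2 - d w)) v) := by
      intro v
      rw [Matrix.mulVec, dotProduct, Finset.mul_sum]
      exact Finset.sum_congr rfl (fun w _ => by ring)
    have hneg2 : (fun w => (2:ℚ) - d w) = -(fun v => d v - 2) := by
      funext w; simp only [Pi.neg_apply]; ring
    have hmv : J⁻¹.mulVec (fun w => 2 - d w) = fun v => -(K v + 1) := by
      rw [hneg2, Matrix.mulVec_neg, hinv]
      rfl
    calc (∑ v, ∑ w, (2 - d v) * (2 - d w) * (J⁻¹ v w))
        = ∑ v, (2 - d v) * ((J⁻¹.mulVec (fun w => 2 - d w)) v) :=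
          Finset.sum_congr rfl (fun v _ => hstep v)
      _ = ∑ v, (2 - d v) * (-(K v + 1)) := by rw [hmv]
      _ = ∑ v, (d v - 2) * (K v + 1) :=
          Finset.sum_congr rfl (fun v _ => by ring)
  rw [hS]
  -- expand S
  have hSexp : (∑ v, (d v - 2) * (K v + 1))
      = ∑ v, ∑ w, J v w * (K w + 1) * (K v + 1) := by
    refine Finset.sum_congr rfl (fun v _ => ?_)
    have := congrFun hcK v
    rw [Matrix.mulVec, dotProduct] at this
    rw [← this, Finset.sum_mul]
  rw [hSexp]
  have hexp2 : (∑ v, ∑ w, J v w * (K w + 1) * (K v + 1))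
      = (∑ v, ∑ w, J v w * K w * K v) + (∑ v, ∑ w, J v w * K w)
        + (∑ v, ∑ w, J v w * K v) + (∑ v, ∑ w, J v w) := by
    rw [← Finset.sum_add_distrib, ← Finset.sum_add_distrib, ← Finset.sum_add_distrib]
    refine Finset.sum_congr rfl (fun v _ => ?_)
    rw [← Finset.sum_add_distrib, ← Finset.sum_add_distrib, ← Finset.sum_add_distrib]
    exact Finset.sum_congr rfl (fun w _ => by ring)
  rw [hexp2]
  -- evaluate the pieces
  have hb : ∀ v, (∑ w, J v w * K w) = -(I v v : ℚ) - 2 := by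
    intro v
    have := congrFun hK v
    rwa [Matrix.mulVec, dotProduct] at this
  have hD1 : (∑ v, ∑ w, J v w * K w * K v) = ∑ v, (-(I v v : ℚ) - 2) * K v := by
    refine Finset.sum_congr rfl (fun v _ => ?_)
    rw [← Finset.sum_mul, hb v]
  have hD2 : (∑ v, ∑ w, J v w * K w) = ∑ v, (-(I v v : ℚ) - 2) :=
    Finset.sum_congr rfl (fun v _ => hb v)
  have hD3 : (∑ v, ∑ w, J v w * K v) = ∑ v, (-(I v v : ℚ) - 2) := by
    rw [Finset.sum_comm]
    refine Finset.sum_congr rfl (fun w _ => ?_)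
    rw [← hb w]
    exact Finset.sum_congr rfl (fun v _ => by rw [hJsym w v])
  have hD4 : (∑ v, ∑ w, J v w) = ∑ v, ((I v v : ℚ) + d v) :=
    Finset.sum_congr rfl (fun v _ => hrow v)
  rw [hD1, hD2, hD3, hD4]
  have hLHS : dotProduct K (J.mulVec K) = ∑ v, K v * (-(I v v : ℚ) - 2) := by
    rw [dotProduct]
    exact Finset.sum_congr rfl (fun v _ => by rw [congrFun hK v])
  rw [hLHS]
  have e1 : (∑ v, (-(I v v : ℚ) - 2)) = -(∑ v, (I v v : ℚ)) - 2 * s := by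
    rw [Finset.sum_sub_distrib, Finset.sum_neg_distrib]
    simp [Finset.card_univ, mul_comm]
  have e2 : (∑ v, ((I v v : ℚ) + d v)) = (∑ v, (I v v : ℚ)) + (2 * (s:ℚ) - 2) := by
    rw [Finset.sum_add_distrib, hdsum]
  have e3 : (∑ v, (-(I v v : ℚ) - 2) * K v) = ∑ v, K v * (-(I v v : ℚ) - 2) :=
    Finset.sum_congr rfl (fun v _ => by ring)
  rw [e1, e2, e3]
  ring
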